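/- Local parameterization of the 1-shock polar by shock speed: let γ>1, let U_b=(u_b,v_b,p_b,ρ_b) and U₁=(u₁,0,p₁,ρ₁) be states with ρ_b,ρ₁>0, p_b,p₁>0, u₁>c₁ where c₁=√(γp₁/ρ₁), and let σ₁₀ satisfy λ₁(U₁) < σ₁₀ < 0 (λ₁(U₁) = −c₁/√(u₁²−c₁²)) and the Rankine–Hugoniot conditions σ₁₀·(W(U₁)−W(U_b)) = H(U₁)−H(U_b). Then there exist open neighborhoods N₁ of σ₁₀ in ℝ, N₂ of U_b in ℝ⁴, N₃ of U₁ in ℝ⁴, and a continuously differentiable map G₁ : N₁×N₂ → N₃ with G₁(σ₁₀,U_b)=U₁ such that for all (σ,U₀) ∈ N₁×N₂ and all U ∈ N₃: σ·(W(U)−W(U₀)) = H(U)−H(U₀) if and only if U = G₁(σ,U₀). -/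

import Mathlib

noncomputable section

/-- The flux map `W` of the 2-D steady full Euler system,
with state `U = (u, v, p, ρ)`. -/
def Wf (γ : ℝ) (U : Fin 4 → ℝ) : Fin 4 → ℝ :=
  ![U 3 * U 0,
    U 3 * U 0 ^ 2 + U 2,
    U 3 * U 0 * U 1,
    U 3 * U 0 * (γ * U 2 / ((γ - 1) * U 3) + (U 0 ^ 2 + U 1 ^ 2) / 2)]

/-- The flux map `H` of the 2-D steady full Euler system. -/
def Hf (γ : ℝ) (U : Fin 4 → ℝ) : Fin 4 → ℝ :=
  ![U 3 * U 1,
    U 3 * U 0 * U 1,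
    U 3 * U 1 ^ 2 + U 2,
    U 3 * U 1 * (γ * U 2 / ((γ - 1) * U 3) + (U 0 ^ 2 + U 1 ^ 2) / 2)]

open ContinuousLinearMap in
/-- The partial derivative in `U` of `σ•W − H` at the state `(u,0,p,ρ)`. -/
def Dmat (γ σ u p ρ : ℝ) : (Fin 4 → ℝ) →L[ℝ] (Fin 4 → ℝ) :=
  ContinuousLinearMap.pi
    ![(σ*ρ) • (proj 0 : (Fin 4 → ℝ) →L[ℝ] ℝ) + (-ρ) • proj 1 + (σ*u) • proj 3,
      (2*σ*ρ*u) • (proj 0 : (Fin 4 → ℝ) →L[ℝ] ℝ) + (-(ρ*u)) • proj 1 + σ • proj 2 + (σ*u^2) • proj 3,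
      (σ*ρ*u) • (proj 1 : (Fin 4 → ℝ) →L[ℝ] ℝ) + (-1 : ℝ) • proj 2,
      (σ*(γ/(γ-1)*p + 3/2*(ρ*u^2))) • (proj 0 : (Fin 4 → ℝ) →L[ℝ] ℝ)
        + (-(γ/(γ-1)*p + ρ*u^2/2)) • proj 1 + (σ*u*(γ/(γ-1))) • proj 2 + (σ*u^3/2) • proj 3]

/-- Polynomial version of `σ•W − H` (valid where the density is nonzero). -/
def FUpoly (γ σ : ℝ) (U : Fin 4 → ℝ) : Fin 4 → ℝ :=
  ![σ*(U 3*U 0) - U 3*U 1,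
    σ*(U 3*U 0^2 + U 2) - U 3*U 0*U 1,
    σ*(U 3*U 0*U 1) - (U 3*U 1^2 + U 2),
    σ*(γ/(γ-1)*(U 0*U 2) + U 3*U 0*((U 0^2+U 1^2)/2))
      - (γ/(γ-1)*(U 1*U 2) + U 3*U 1*((U 0^2+U 1^2)/2))]

lemma FUpoly_eq (γ σ : ℝ) (hγ : γ ≠ 1) (U : Fin 4 → ℝ) (hU : U 3 ≠ 0) :
    σ • Wf γ U - Hf γ U = FUpoly γ σ U := by
  have h1 : γ - 1 ≠ 0 := sub_ne_zero.mpr hγ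
  funext i
  fin_cases i <;> simp [Wf, Hf, FUpoly] <;> field_simp <;> ring

open ContinuousLinearMap in
lemma hasFDerivAt_FUpoly (γ σ u p ρ : ℝ) :
    HasFDerivAt (FUpoly γ σ) (Dmat γ σ u p ρ) ![u,0,p,ρ] := by
  rw [show (FUpoly γ σ) = (fun U (i : Fin 4) => FUpoly γ σ U i) from rfl]
  apply hasFDerivAt_pi''
  intro i
  set U₁ : Fin 4 → ℝ := ![u,0,p,ρ] with hU₁
  have h0 := hasFDerivAt_apply (𝕜 := ℝ) 0 U₁
  have h1 := hasFDerivAt_apply (𝕜 := ℝ) 1 U₁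
  have h2 := hasFDerivAt_apply (𝕜 := ℝ) 2 U₁
  have h3 := hasFDerivAt_apply (𝕜 := ℝ) 3 U₁
  fin_cases i
  · have h := (((h3.mul h0).const_mul σ).sub (h3.mul h1))
    convert h using 2
    all_goals first
      | ((show FUpoly γ σ _ 0 = _); simp only [Pi.mul_apply, Pi.sub_apply, Pi.add_apply, Pi.pow_apply, FUpoly, Matrix.cons_val_zero]; all_goals ring)
      | (ext δ; simp [Dmat, hU₁]; ring)
  · have h := (((h3.mul (h0.mul h0)).add h2).const_mul σ).sub ((h3.mul h0).mul h1)
    convert h using 2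
    all_goals first
      | ((show FUpoly γ σ _ 1 = _); simp only [Pi.mul_apply, Pi.sub_apply, Pi.add_apply, Pi.pow_apply, FUpoly, Matrix.cons_val_one, Matrix.cons_val_zero, Matrix.head_cons];
          all_goals ring)
      | (ext δ; simp [Dmat, hU₁]; ring)
  · have h := (((h3.mul h0).mul h1).const_mul σ).sub ((h3.mul (h1.mul h1)).add h2)
    convert h using 2
    all_goals first
      | ((show FUpoly γ σ _ 2 = _); simp only [Pi.mul_apply, Pi.sub_apply, Pi.add_apply, Pi.pow_apply, FUpoly, Matrix.cons_val_two, Matrix.tail_cons,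
          Matrix.head_cons]; all_goals ring)
      | (ext δ; simp [Dmat, hU₁]; ring)
  · have hq := ((h0.mul h0).add (h1.mul h1)).mul_const ((2:ℝ)⁻¹)
    have h := ((((h0.mul h2).const_mul (γ/(γ-1))).add ((h3.mul h0).mul hq)).const_mul σ).sub
      (((h1.mul h2).const_mul (γ/(γ-1))).add ((h3.mul h1).mul hq))
    convert h using 2
    all_goals first
      | ((show FUpoly γ σ _ 3 = _); simp only [Pi.mul_apply, Pi.sub_apply, Pi.add_apply, Pi.pow_apply, FUpoly, Matrix.cons_val_three, Matrix.tail_cons,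
          Matrix.head_cons]; all_goals ring)
      | (ext δ; simp [Dmat, hU₁]; ring)

lemma Dmat_ker (γ σ u p ρ : ℝ) (hγ : 1 < γ) (hρ : 0 < ρ)
    (hu : 0 < u) (hσ : σ < 0) (hlt : σ^2*(ρ*u^2 - γ*p) < γ*p)
    (δ : Fin 4 → ℝ) (h : Dmat γ σ u p ρ δ = 0) : δ = 0 := by
  have hγ1 : γ - 1 ≠ 0 := by intro hc; rw [sub_eq_zero] at hc; rw [hc] at hγ; exact lt_irrefl 1 hγ
  have e0 := congrFun h 0
  have e1 := congrFun h 1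
  have e2 := congrFun h 2
  have e3 := congrFun h 3
  simp [Dmat] at e0 e1 e2 e3
  field_simp at e3
  have hσne : σ ≠ 0 := ne_of_lt hσ
  have hρne : ρ ≠ 0 := ne_of_gt hρ
  have hune : u ≠ 0 := ne_of_gt hu
  have eclean : σ*(γ*p + 3/2*((γ-1)*(ρ*u^2)))*δ 0 - (γ*p + (γ-1)*(ρ*u^2)/2)*δ 1
      + σ*u*γ*δ 2 + (γ-1)*(σ*u^3/2)*δ 3 = 0 := by
    have h8 : (8*(γ-1)^2 : ℝ) ≠ 0 := by positivity
    have T : (8*(γ-1)^2) * (σ*(γ*p + 3/2*((γ-1)*(ρ*u^2)))*δ 0 - (γ*p + (γ-1)*(ρ*u^2)/2)*δ 1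
        + σ*u*γ*δ 2 + (γ-1)*(σ*u^3/2)*δ 3) = 0 := by linear_combination 4*(γ-1)^2 * e3
    exact (mul_eq_zero.mp T).resolve_left h8
  have hxy0 : σ*ρ*u*(δ 0 + σ*δ 1) = 0 := by linear_combination e1 + σ*e2 - u*e0
  have hxy : δ 0 + σ*δ 1 = 0 :=
    (mul_eq_zero.mp hxy0).resolve_left (mul_ne_zero (mul_ne_zero hσne hρne) hune)
  have hkey : δ 1 * (σ^2*(ρ*u^2-γ*p) - γ*p) = 0 := by
    linear_combination eclean + σ*u*γ*e2 - (γ-1)*(u^2/2)*e0 - σ*(γ*p+(γ-1)*(ρ*u^2))*hxy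
  have hBneg : σ^2*(ρ*u^2-γ*p) - γ*p ≠ 0 := by linarith
  have hy : δ 1 = 0 := (mul_eq_zero.mp hkey).resolve_right hBneg
  have hx : δ 0 = 0 := by rw [hy] at hxy; linarith
  have hz : δ 2 = 0 := by rw [hy] at e2; linarith
  have hw : δ 3 = 0 := by
    rw [hx, hy] at e0
    have h4 : σ*u*δ 3 = 0 := by linarith
    exact (mul_eq_zero.mp h4).resolve_left (mul_ne_zero hσne hune)
  funext i; fin_cases i <;> simp [hx, hy, hz, hw]

open Topology Filter Set

/-- The RH defect map, as a function of `(σ, U₀, U)`. -/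
def FfE (γ : ℝ) (x : ℝ × (Fin 4 → ℝ) × (Fin 4 → ℝ)) : Fin 4 → ℝ :=
  x.1 • (Wf γ x.2.2 - Wf γ x.2.1) - (Hf γ x.2.2 - Hf γ x.2.1)

/-- The full map to be inverted. -/
def PhiE (γ : ℝ) (x : ℝ × (Fin 4 → ℝ) × (Fin 4 → ℝ)) : ℝ × (Fin 4 → ℝ) × (Fin 4 → ℝ) :=
  (x.1, x.2.1, FfE γ x)

lemma contDiffAt_WfHf {E' : Type*} [NormedAddCommGroup E'] [NormedSpace ℝ E'] (γ : ℝ)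
    (hγ : γ - 1 ≠ 0) {g : E' → (Fin 4 → ℝ)} (hg : ContDiff ℝ 1 g) {x : E'} (hx : g x 3 ≠ 0) :
    ContDiffAt ℝ 1 (fun y => Wf γ (g y)) x ∧ ContDiffAt ℝ 1 (fun y => Hf γ (g y)) x := by
  have hc : ∀ i, ContDiffAt ℝ 1 (fun y => g y i) x := fun i => (contDiff_pi.mp hg i).contDiffAt
  have hquot : ContDiffAt ℝ 1
      (fun y => γ * g y 2 / ((γ-1) * g y 3) + ((g y 0)^2 + (g y 1)^2)/2) x := by
    have hdiv := (contDiffAt_const (c := γ)).mul (hc 2) |>.div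
      ((contDiffAt_const (c := γ-1)).mul (hc 3)) (mul_ne_zero hγ hx)
    have hsq : ContDiffAt ℝ 1 (fun y => ((g y 0)^2 + (g y 1)^2)/2) x :=
      (((hc 0).pow 2).add ((hc 1).pow 2)).div contDiffAt_const two_ne_zero
    exact hdiv.add hsq
  constructor
  · rw [contDiffAt_pi]
    intro i; fin_cases i
    · simpa only [Fin.reduceFinMk, Fin.isValue, Wf, Matrix.cons_val_zero] using (hc 3).mul (hc 0)
    · simpa only [Fin.reduceFinMk, Fin.isValue, Wf, Matrix.cons_val_one, Matrix.cons_val_zero, Matrix.head_cons] using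
        ((hc 3).mul ((hc 0).pow 2)).add (hc 2)
    · simpa only [Fin.reduceFinMk, Fin.isValue, Wf, Matrix.cons_val_two, Matrix.tail_cons, Matrix.head_cons] using
        ((hc 3).mul (hc 0)).mul (hc 1)
    · simpa only [Fin.reduceFinMk, Fin.isValue, Wf, Matrix.cons_val_three, Matrix.tail_cons, Matrix.head_cons] using
        ((hc 3).mul (hc 0)).mul hquot
  · rw [contDiffAt_pi]
    intro i; fin_cases i
    · simpa only [Fin.reduceFinMk, Fin.isValue, Hf, Matrix.cons_val_zero] using (hc 3).mul (hc 1)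
    · simpa only [Fin.reduceFinMk, Fin.isValue, Hf, Matrix.cons_val_one, Matrix.cons_val_zero, Matrix.head_cons] using
        ((hc 3).mul (hc 0)).mul (hc 1)
    · simpa only [Fin.reduceFinMk, Fin.isValue, Hf, Matrix.cons_val_two, Matrix.tail_cons, Matrix.head_cons] using
        ((hc 3).mul ((hc 1).pow 2)).add (hc 2)
    · simpa only [Fin.reduceFinMk, Fin.isValue, Hf, Matrix.cons_val_three, Matrix.tail_cons, Matrix.head_cons] using
        ((hc 3).mul (hc 1)).mul hquot

lemma contDiffAt_PhiE (γ : ℝ) (hγ : γ - 1 ≠ 0) (x₀ : ℝ × (Fin 4 → ℝ) × (Fin 4 → ℝ))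
    (h1 : x₀.2.1 3 ≠ 0) (h2 : x₀.2.2 3 ≠ 0) : ContDiffAt ℝ 1 (PhiE γ) x₀ := by
  have hg2 : ContDiff ℝ 1 (fun x : ℝ × (Fin 4 → ℝ) × (Fin 4 → ℝ) => x.2.2) :=
    contDiff_snd.comp contDiff_snd
  have hg1 : ContDiff ℝ 1 (fun x : ℝ × (Fin 4 → ℝ) × (Fin 4 → ℝ) => x.2.1) :=
    contDiff_fst.comp contDiff_snd
  obtain ⟨hW2, hH2⟩ := contDiffAt_WfHf γ hγ hg2 h2
  obtain ⟨hW1, hH1⟩ := contDiffAt_WfHf γ hγ hg1 h1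
  have hFf : ContDiffAt ℝ 1 (FfE γ) x₀ :=
    ((contDiff_fst.contDiffAt).smul (hW2.sub hW1)).sub (hH2.sub hH1)
  exact (contDiff_fst.contDiffAt).prodMk (((contDiff_fst.comp contDiff_snd).contDiffAt).prodMk hFf)

/-- Local parameterization of the 1-shock polar by shock speed: near a strong 1-shock
`(σ₁₀, U_b, U₁)`, the Rankine–Hugoniot conditions are locally uniquely solvable for the
above state `U` as a `C¹` function `G₁(σ, U₀)` of the speed and the below state. -/
theorem shock1_polar_parameterization
    (γ u_b v_b p_b ρ_b u₁ p₁ ρ₁ σ₁₀ : ℝ) (hγ : 1 < γ)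
    (hρb : 0 < ρ_b) (hρ1 : 0 < ρ₁) (hpb : 0 < p_b) (hp1 : 0 < p₁)
    (c₁ : ℝ) (hc₁ : c₁ = Real.sqrt (γ * p₁ / ρ₁)) (hsup : c₁ < u₁)
    (Ub U₁ : Fin 4 → ℝ) (hUb : Ub = ![u_b, v_b, p_b, ρ_b]) (hU₁ : U₁ = ![u₁, 0, p₁, ρ₁])
    (hσ1 : -c₁ / Real.sqrt (u₁ ^ 2 - c₁ ^ 2) < σ₁₀) (hσ2 : σ₁₀ < 0)
    (hRH : σ₁₀ • (Wf γ U₁ - Wf γ Ub) = Hf γ U₁ - Hf γ Ub) :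
    ∃ (N₁ : Set ℝ) (N₂ N₃ : Set (Fin 4 → ℝ)),
      IsOpen N₁ ∧ IsOpen N₂ ∧ IsOpen N₃ ∧
      σ₁₀ ∈ N₁ ∧ Ub ∈ N₂ ∧ U₁ ∈ N₃ ∧
      ∃ G₁ : ℝ → (Fin 4 → ℝ) → (Fin 4 → ℝ),
        ContDiffOn ℝ 1 (fun q : ℝ × (Fin 4 → ℝ) => G₁ q.1 q.2) (N₁ ×ˢ N₂) ∧
        G₁ σ₁₀ Ub = U₁ ∧
        (∀ σ ∈ N₁, ∀ U₀ ∈ N₂, G₁ σ U₀ ∈ N₃) ∧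
        (∀ σ ∈ N₁, ∀ U₀ ∈ N₂, ∀ U ∈ N₃,
          (σ • (Wf γ U - Wf γ U₀) = Hf γ U - Hf γ U₀ ↔ U = G₁ σ U₀)) := by
  classical
  have hγ1 : γ - 1 ≠ 0 := by intro hc; rw [sub_eq_zero] at hc; rw [← hc] at hγ; exact lt_irrefl _ hγ
  -- basic numeric facts
  have hc2pos : 0 < γ * p₁ / ρ₁ := by positivity
  have hc1pos : 0 < c₁ := by rw [hc₁]; exact Real.sqrt_pos.mpr hc2pos
  have hcsq : c₁^2 = γ * p₁ / ρ₁ := by rw [hc₁]; exact Real.sq_sqrt hc2pos.le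
  have hu1 : 0 < u₁ := lt_trans hc1pos hsup
  have hdiff : (0:ℝ) < u₁^2 - c₁^2 := by nlinarith
  have hspos : 0 < Real.sqrt (u₁^2 - c₁^2) := Real.sqrt_pos.mpr hdiff
  have hs2 : (Real.sqrt (u₁^2 - c₁^2))^2 = u₁^2 - c₁^2 := Real.sq_sqrt hdiff.le
  have h1 : -c₁ < σ₁₀ * Real.sqrt (u₁^2 - c₁^2) := by
    rw [div_lt_iff₀ hspos] at hσ1; exact hσ1
  have h2 : σ₁₀ * Real.sqrt (u₁^2 - c₁^2) < 0 := mul_neg_of_neg_of_pos hσ2 hspos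
  have h3 : (σ₁₀ * Real.sqrt (u₁^2 - c₁^2))^2 < c₁^2 := by nlinarith
  have hσsq : σ₁₀^2 * (u₁^2 - c₁^2) < c₁^2 := by nlinarith [hs2]
  have hgp : γ * p₁ = ρ₁ * c₁^2 := by rw [hcsq]; field_simp
  have hlt : σ₁₀^2*(ρ₁*u₁^2 - γ*p₁) < γ*p₁ := by
    nlinarith [mul_lt_mul_of_pos_left hσsq hρ1]
  -- the base point
  set a : ℝ × (Fin 4 → ℝ) × (Fin 4 → ℝ) := (σ₁₀, Ub, U₁) with ha
  have hUb3 : Ub 3 ≠ 0 := by rw [hUb]; simpa using ne_of_gt hρb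
  have hU₁3 : U₁ 3 ≠ 0 := by rw [hU₁]; simpa using ne_of_gt hρ1
  have hΦsm : ContDiffAt ℝ 1 (PhiE γ) a := contDiffAt_PhiE γ hγ1 a hUb3 hU₁3
  have hLd : DifferentiableAt ℝ (PhiE γ) a := hΦsm.differentiableAt one_ne_zero
  set L : (ℝ × (Fin 4 → ℝ) × (Fin 4 → ℝ)) →L[ℝ] (ℝ × (Fin 4 → ℝ) × (Fin 4 → ℝ)) :=
    fderiv ℝ (PhiE γ) a with hLdef
  have hL : HasFDerivAt (PhiE γ) L a := hLd.hasFDerivAt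
  -- structure of L
  set π₁ : (ℝ × (Fin 4 → ℝ) × (Fin 4 → ℝ)) →L[ℝ] ℝ :=
    ContinuousLinearMap.fst ℝ ℝ ((Fin 4 → ℝ) × (Fin 4 → ℝ)) with hπ₁
  set π₂ : (ℝ × (Fin 4 → ℝ) × (Fin 4 → ℝ)) →L[ℝ] (Fin 4 → ℝ) :=
    (ContinuousLinearMap.fst ℝ (Fin 4 → ℝ) (Fin 4 → ℝ)).comp
      (ContinuousLinearMap.snd ℝ ℝ ((Fin 4 → ℝ) × (Fin 4 → ℝ))) with hπ₂
  set π₃ : (ℝ × (Fin 4 → ℝ) × (Fin 4 → ℝ)) →L[ℝ] (Fin 4 → ℝ) :=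
    (ContinuousLinearMap.snd ℝ (Fin 4 → ℝ) (Fin 4 → ℝ)).comp
      (ContinuousLinearMap.snd ℝ ℝ ((Fin 4 → ℝ) × (Fin 4 → ℝ))) with hπ₃
  have hL1 : π₁.comp L = π₁ := by
    have h' : HasFDerivAt (⇑π₁ ∘ PhiE γ) (π₁.comp L) a := (π₁.hasFDerivAt).comp a hL
    have h'' : HasFDerivAt (fun x : ℝ × (Fin 4 → ℝ) × (Fin 4 → ℝ) => (PhiE γ x).1)
        (π₁.comp L) a := h'
    exact h''.unique (hasFDerivAt_fst)
  have hL2 : π₂.comp L = π₂ := by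
    have h' : HasFDerivAt (⇑π₂ ∘ PhiE γ) (π₂.comp L) a := (π₂.hasFDerivAt).comp a hL
    have h'' : HasFDerivAt (fun x : ℝ × (Fin 4 → ℝ) × (Fin 4 → ℝ) => (PhiE γ x).2.1)
        (π₂.comp L) a := h'
    have hsnd : HasFDerivAt (Prod.snd : (ℝ × (Fin 4 → ℝ) × (Fin 4 → ℝ)) → _)
        (ContinuousLinearMap.snd ℝ ℝ ((Fin 4 → ℝ) × (Fin 4 → ℝ))) a := hasFDerivAt_snd
    have hfst : HasFDerivAt (Prod.fst : ((Fin 4 → ℝ) × (Fin 4 → ℝ)) → (Fin 4 → ℝ))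
        (ContinuousLinearMap.fst ℝ (Fin 4 → ℝ) (Fin 4 → ℝ)) a.2 := hasFDerivAt_fst
    have hc : HasFDerivAt ((Prod.fst : ((Fin 4 → ℝ) × (Fin 4 → ℝ)) → (Fin 4 → ℝ)) ∘
        (Prod.snd : (ℝ × (Fin 4 → ℝ) × (Fin 4 → ℝ)) → _)) π₂ a := hfst.comp a hsnd
    have hc' : HasFDerivAt (fun x : ℝ × (Fin 4 → ℝ) × (Fin 4 → ℝ) => (PhiE γ x).2.1) π₂ a := hc
    exact h''.unique hc'
  have hL3 : HasFDerivAt (FfE γ) (π₃.comp L) a := by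
    have h' : HasFDerivAt (⇑π₃ ∘ PhiE γ) (π₃.comp L) a := (π₃.hasFDerivAt).comp a hL
    exact h'
  -- the partial derivative in U
  set j : (Fin 4 → ℝ) →L[ℝ] (ℝ × (Fin 4 → ℝ) × (Fin 4 → ℝ)) :=
    (0 : (Fin 4 → ℝ) →L[ℝ] ℝ).prod
      ((0 : (Fin 4 → ℝ) →L[ℝ] (Fin 4 → ℝ)).prod (ContinuousLinearMap.id ℝ (Fin 4 → ℝ))) with hj
  have hι : HasFDerivAt (fun U : Fin 4 → ℝ => ((σ₁₀, Ub, U) : ℝ × (Fin 4 → ℝ) × (Fin 4 → ℝ)))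
      j U₁ :=
    (hasFDerivAt_const σ₁₀ U₁).prodMk ((hasFDerivAt_const Ub U₁).prodMk (hasFDerivAt_id U₁))
  have hcomp : HasFDerivAt (fun U => FfE γ (σ₁₀, Ub, U)) ((π₃.comp L).comp j) U₁ :=
    HasFDerivAt.comp (g := FfE γ) U₁ hL3 hι
  have hexp : HasFDerivAt (fun U => FfE γ (σ₁₀, Ub, U)) (Dmat γ σ₁₀ u₁ p₁ ρ₁) U₁ := by
    have hCeq : ∀ U : Fin 4 → ℝ, FfE γ (σ₁₀, Ub, U)
        = (σ₁₀ • Wf γ U - Hf γ U) - (σ₁₀ • Wf γ Ub - Hf γ Ub) := by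
      intro U
      show σ₁₀ • (Wf γ U - Wf γ Ub) - (Hf γ U - Hf γ Ub) = _
      module
    have hmem : {U : Fin 4 → ℝ | U 3 ≠ 0} ∈ 𝓝 U₁ := by
      refine IsOpen.mem_nhds ?_ hU₁3
      exact IsOpen.preimage (continuous_apply 3) isOpen_compl_singleton
    have hγne : γ ≠ 1 := by intro hh; exact hγ1 (by rw [hh]; ring)
    have hEv : (fun U => FfE γ (σ₁₀, Ub, U)) =ᶠ[𝓝 U₁]
        (fun U => FUpoly γ σ₁₀ U - (σ₁₀ • Wf γ Ub - Hf γ Ub)) := by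
      filter_upwards [hmem] with U hU
      rw [hCeq U, FUpoly_eq γ σ₁₀ hγne U hU]
    have hpoly : HasFDerivAt (fun U => FUpoly γ σ₁₀ U - (σ₁₀ • Wf γ Ub - Hf γ Ub))
        (Dmat γ σ₁₀ u₁ p₁ ρ₁) U₁ := by
      rw [hU₁]
      exact (hasFDerivAt_FUpoly γ σ₁₀ u₁ p₁ ρ₁).sub_const _
    exact hpoly.congr_of_eventuallyEq hEv
  have huniq : (π₃.comp L).comp j = Dmat γ σ₁₀ u₁ p₁ ρ₁ := hcomp.unique hexp
  -- injectivity of L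
  have hker : ∀ x : ℝ × (Fin 4 → ℝ) × (Fin 4 → ℝ), L x = 0 → x = 0 := by
    intro x hx
    have k1 : x.1 = 0 := by
      have h' := DFunLike.congr_fun hL1 x
      simp only [ContinuousLinearMap.comp_apply] at h'
      rw [hx] at h'
      have : ((0 : ℝ × (Fin 4 → ℝ) × (Fin 4 → ℝ)).1) = x.1 := h'
      simpa using this.symm
    have k2 : x.2.1 = 0 := by
      have h' := DFunLike.congr_fun hL2 x
      simp only [ContinuousLinearMap.comp_apply] at h'
      rw [hx] at h'
      have : ((0 : ℝ × (Fin 4 → ℝ) × (Fin 4 → ℝ)).2.1) = x.2.1 := h'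
      simpa using this.symm
    have hjx : j x.2.2 = x := by
      have : j x.2.2 = ((0:ℝ), (0 : Fin 4 → ℝ), x.2.2) := by
        simp [hj]
      rw [this]
      exact Prod.ext k1.symm (Prod.ext k2.symm rfl)
    have k3 : x.2.2 = 0 := by
      apply Dmat_ker γ σ₁₀ u₁ p₁ ρ₁ hγ hρ1 hu1 hσ2 hlt
      have h' := DFunLike.congr_fun huniq x.2.2
      calc Dmat γ σ₁₀ u₁ p₁ ρ₁ x.2.2 = ((π₃.comp L).comp j) x.2.2 := h'.symm
        _ = (L (j x.2.2)).2.2 := rfl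
        _ = (L x).2.2 := by rw [hjx]
        _ = 0 := by rw [hx]; rfl
    exact Prod.ext k1 (Prod.ext k2 k3)
  have hinj : Function.Injective L := by
    intro x y hxy
    have h' := hker (x - y) (by rw [map_sub, hxy, sub_self])
    exact sub_eq_zero.mp h'
  -- upgrade to a continuous linear equivalence
  set eL := (LinearEquiv.ofInjectiveEndo
    (↑L : (ℝ × (Fin 4 → ℝ) × (Fin 4 → ℝ)) →ₗ[ℝ] (ℝ × (Fin 4 → ℝ) × (Fin 4 → ℝ))) hinj
    ).toContinuousLinearEquiv with heL
  have hcoe : (eL : (ℝ × (Fin 4 → ℝ) × (Fin 4 → ℝ)) →L[ℝ] (ℝ × (Fin 4 → ℝ) × (Fin 4 → ℝ))) = L := by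
    exact ContinuousLinearMap.ext fun x => rfl
  have hd : HasFDerivAt (PhiE γ)
      (eL : (ℝ × (Fin 4 → ℝ) × (Fin 4 → ℝ)) →L[ℝ] (ℝ × (Fin 4 → ℝ) × (Fin 4 → ℝ))) a := by
    rw [hcoe]; exact hL
  have hstrict : HasStrictFDerivAt (PhiE γ)
      (eL : (ℝ × (Fin 4 → ℝ) × (Fin 4 → ℝ)) →L[ℝ] (ℝ × (Fin 4 → ℝ) × (Fin 4 → ℝ))) a :=
    hΦsm.hasStrictFDerivAt' hd one_ne_zero
  set PH := hstrict.toOpenPartialHomeomorph (PhiE γ) with hPH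
  have hsrc : a ∈ PH.source := hstrict.mem_toOpenPartialHomeomorph_source
  have hco : ⇑PH = PhiE γ := hstrict.toOpenPartialHomeomorph_coe
  have hΦa : PhiE γ a = (σ₁₀, Ub, (0 : Fin 4 → ℝ)) := by
    have h0 : FfE γ a = 0 := by
      show σ₁₀ • (Wf γ U₁ - Wf γ Ub) - (Hf γ U₁ - Hf γ Ub) = 0
      rw [hRH, sub_self]
    show (σ₁₀, Ub, FfE γ a) = _
    rw [h0]
  have htgt : ((σ₁₀, Ub, (0 : Fin 4 → ℝ)) : ℝ × (Fin 4 → ℝ) × (Fin 4 → ℝ)) ∈ PH.target := by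
    rw [← hΦa]; exact hstrict.image_mem_toOpenPartialHomeomorph_target
  have hinvCD : ContDiffAt ℝ 1 (⇑PH.symm) (σ₁₀, Ub, (0 : Fin 4 → ℝ)) := by
    rw [← hΦa]
    exact hΦsm.to_localInverse hd one_ne_zero
  -- the candidate implicit function
  have hφm : ContDiff ℝ 1
      (fun q : ℝ × (Fin 4 → ℝ) => ((q.1, q.2, (0 : Fin 4 → ℝ)) : ℝ × (Fin 4 → ℝ) × (Fin 4 → ℝ))) :=
    contDiff_fst.prodMk (contDiff_snd.prodMk contDiff_const)
  have hgCD : ContDiffAt ℝ 1 (fun q : ℝ × (Fin 4 → ℝ) => PH.symm (q.1, q.2, 0)) (σ₁₀, Ub) :=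
    hinvCD.comp (σ₁₀, Ub) (hφm.contDiffAt)
  obtain ⟨Vn, hVn, hVcd⟩ := hgCD.contDiffOn le_rfl (by simp)
  obtain ⟨V, hVsub, hVopen, hVmem⟩ := mem_nhds_iff.mp hVn
  have hVcd' := hVcd.mono hVsub
  -- product neighborhood inside the source
  have hsrcnh : PH.source ∈ 𝓝 a := PH.open_source.mem_nhds hsrc
  obtain ⟨A', hA', W', hW', hAW⟩ := mem_nhds_prod_iff.mp hsrcnh
  obtain ⟨B', hB', C', hC', hBC⟩ := mem_nhds_prod_iff.mp hW'
  obtain ⟨A, hAsub, hAopen, hAmem⟩ := mem_nhds_iff.mp hA'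
  obtain ⟨B, hBsub, hBopen, hBmem⟩ := mem_nhds_iff.mp hB'
  obtain ⟨C, hCsub, hCopen, hCmem⟩ := mem_nhds_iff.mp hC'
  have hprodsub : ∀ σ U₀ U, σ ∈ A → U₀ ∈ B → U ∈ C →
      ((σ, U₀, U) : ℝ × (Fin 4 → ℝ) × (Fin 4 → ℝ)) ∈ PH.source := by
    intro σ U₀ U hσ hU₀ hU
    exact hAW (Set.mk_mem_prod (hAsub hσ) (hBC (Set.mk_mem_prod (hBsub hU₀) (hCsub hU))))
  -- open conditions on (σ, U₀)
  have hTopen : IsOpen {q : ℝ × (Fin 4 → ℝ) |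
      ((q.1, q.2, (0 : Fin 4 → ℝ)) : ℝ × (Fin 4 → ℝ) × (Fin 4 → ℝ)) ∈ PH.target} :=
    IsOpen.preimage (hφm.continuous) PH.open_target
  have hga : PH.symm (σ₁₀, Ub, (0 : Fin 4 → ℝ)) = a := by
    have h' := PH.left_inv hsrc
    rw [hco, hΦa] at h'
    exact h'
  have hgc : ContinuousOn (fun q : ℝ × (Fin 4 → ℝ) => (PH.symm (q.1, q.2, 0)).2.2) V :=
    (continuous_snd.comp continuous_snd).comp_continuousOn (hVcd'.continuousOn)
  have hMopen : IsOpen (V ∩ (fun q : ℝ × (Fin 4 → ℝ) => (PH.symm (q.1, q.2, 0)).2.2) ⁻¹' C) :=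
    hgc.isOpen_inter_preimage hVopen hCopen
  have hMmem : (σ₁₀, Ub) ∈ V ∩ (fun q : ℝ × (Fin 4 → ℝ) => (PH.symm (q.1, q.2, 0)).2.2) ⁻¹' C := by
    refine ⟨hVmem, ?_⟩
    show (PH.symm (σ₁₀, Ub, 0)).2.2 ∈ C
    rw [hga]
    exact hCmem
  set O := ((A ×ˢ B) ∩ {q : ℝ × (Fin 4 → ℝ) |
      ((q.1, q.2, (0 : Fin 4 → ℝ)) : ℝ × (Fin 4 → ℝ) × (Fin 4 → ℝ)) ∈ PH.target}) ∩
      (V ∩ (fun q : ℝ × (Fin 4 → ℝ) => (PH.symm (q.1, q.2, 0)).2.2) ⁻¹' C) with hO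
  have hOopen : IsOpen O := ((hAopen.prod hBopen).inter hTopen).inter hMopen
  have hOmem : (σ₁₀, Ub) ∈ O := ⟨⟨Set.mk_mem_prod hAmem hBmem, htgt⟩, hMmem⟩
  obtain ⟨N₁, N₂, hN₁o, hN₂o, hN₁m, hN₂m, hNsub⟩ := isOpen_prod_iff.mp hOopen σ₁₀ Ub hOmem
  refine ⟨N₁, N₂, C, hN₁o, hN₂o, hCopen, hN₁m, hN₂m, hCmem,
    fun σ U₀ => (PH.symm (σ, U₀, 0)).2.2, ?_, ?_, ?_, ?_⟩
  · -- C¹ smoothness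
    refine (contDiff_snd.comp contDiff_snd).comp_contDiffOn (hVcd'.mono ?_)
    intro q hq
    exact (hNsub hq).2.1
  · -- value at the base point
    show (PH.symm ((σ₁₀, Ub, (0 : Fin 4 → ℝ)) : ℝ × (Fin 4 → ℝ) × (Fin 4 → ℝ))).2.2 = U₁
    rw [hga]
  · -- maps into N₃
    intro σ hσ U₀ hU₀
    exact (hNsub (Set.mk_mem_prod hσ hU₀)).2.2
  · -- the characterization
    intro σ hσ U₀ hU₀ U hU
    have hqO := hNsub (Set.mk_mem_prod hσ hU₀)
    obtain ⟨⟨hABq, hTq⟩, hVq, hgq⟩ := hqO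
    have hyt : ((σ, U₀, (0 : Fin 4 → ℝ)) : ℝ × (Fin 4 → ℝ) × (Fin 4 → ℝ)) ∈ PH.target := hTq
    have hx'src : PH.symm (σ, U₀, 0) ∈ PH.source := PH.map_target hyt
    have hx'val : PH (PH.symm (σ, U₀, 0)) = (σ, U₀, (0 : Fin 4 → ℝ)) := PH.right_inv hyt
    set x' := PH.symm ((σ, U₀, (0 : Fin 4 → ℝ)) : ℝ × (Fin 4 → ℝ) × (Fin 4 → ℝ)) with hx'
    have hx'eq : x' = (σ, U₀, x'.2.2) := by
      have h' := hx'val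
      rw [hco] at h'
      have h1' : x'.1 = σ := congrArg Prod.fst h'
      have h2' : x'.2.1 = U₀ := congrArg (fun z : ℝ × (Fin 4 → ℝ) × (Fin 4 → ℝ) => z.2.1) h'
      calc x' = (x'.1, x'.2.1, x'.2.2) := rfl
        _ = (σ, U₀, x'.2.2) := by rw [h1', h2']
    have hUsrc : ((σ, U₀, U) : ℝ × (Fin 4 → ℝ) × (Fin 4 → ℝ)) ∈ PH.source :=
      hprodsub σ U₀ U hABq.1 hABq.2 hU
    constructor
    · intro hrh
      have hΦU : PhiE γ (σ, U₀, U) = (σ, U₀, (0 : Fin 4 → ℝ)) := by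
        show (σ, U₀, FfE γ (σ, U₀, U)) = _
        have hz : FfE γ (σ, U₀, U) = 0 := by
          show σ • (Wf γ U - Wf γ U₀) - (Hf γ U - Hf γ U₀) = 0
          rw [hrh, sub_self]
        rw [hz]
      have heq : PH (σ, U₀, U) = PH x' := by
        rw [hco, hΦU]
        rw [hco] at hx'val
        exact hx'val.symm
      have hpt := PH.injOn hUsrc hx'src heq
      exact congrArg (fun z : ℝ × (Fin 4 → ℝ) × (Fin 4 → ℝ) => z.2.2) hpt
    · intro hUeq
      have hxx : ((σ, U₀, U) : ℝ × (Fin 4 → ℝ) × (Fin 4 → ℝ)) = x' := by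
        rw [hUeq]; exact hx'eq.symm
      have hΦU : PhiE γ (σ, U₀, U) = (σ, U₀, (0 : Fin 4 → ℝ)) := by
        rw [← hco, hxx]
        exact hx'val
      have hf0 : FfE γ (σ, U₀, U) = 0 :=
        congrArg (fun z : ℝ × (Fin 4 → ℝ) × (Fin 4 → ℝ) => z.2.2) hΦU
      have hz : σ • (Wf γ U - Wf γ U₀) - (Hf γ U - Hf γ U₀) = 0 := hf0
      exact sub_eq_zero.mp hz
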